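/- Completeness for normal forms: if t₁, t₂ ∈ NF and t₁ ⊏̃_RS t₂ (t₁ is stable-ready-simulated by t₂), then ⊢ t₁ ≤ t₂ is derivable in AX_CLL. -/

import Mathlib

open Classical

/-- Visible actions plus the invisible action τ. -/
inductive ActT (Act : Type) : Type where
  | act : Act → ActT Act
  | tau : ActT Act

/-- Processes of the recursion-free calculus CLL. -/
inductive Proc (Act : Type) : Type where
  | nil  : Proc Act                                -- 0
  | bot  : Proc Act                                -- ⊥
  | pre  : ActT Act → Proc Act → Proc Act          -- α.t
  | ec   : Proc Act → Proc Act → Proc Act          -- t □ t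
  | conj : Proc Act → Proc Act → Proc Act          -- t ∧ t
  | disj : Proc Act → Proc Act → Proc Act          -- t ∨ t
  | par  : Set Act → Proc Act → Proc Act → Proc Act -- t ∥_A t

namespace Proc

variable {Act : Type}

/-- Whether a process has a τ-transition (structural stratification used for
the negative premises of the SOS rules). -/
def hasTau : Proc Act → Prop
  | nil => False
  | bot => False
  | pre a _ => a = ActT.tau
  | ec t₁ t₂ => hasTau t₁ ∨ hasTau t₂
  | conj t₁ t₂ => hasTau t₁ ∨ hasTau t₂
  | disj _ _ => True
  | par _ t₁ t₂ => hasTau t₁ ∨ hasTau t₂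

/-- The transition relation, given by the SOS rules of CLL_R. -/
inductive Trans : Proc Act → ActT Act → Proc Act → Prop where
  | pre : Trans (pre α t) α t
  | ecL : Trans t₁ (ActT.act a) t₁' → ¬ hasTau t₂ →
      Trans (ec t₁ t₂) (ActT.act a) t₁'
  | ecR : ¬ hasTau t₁ → Trans t₂ (ActT.act a) t₂' →
      Trans (ec t₁ t₂) (ActT.act a) t₂'
  | ecTauL : Trans t₁ ActT.tau t₁' → Trans (ec t₁ t₂) ActT.tau (ec t₁' t₂)
  | ecTauR : Trans t₂ ActT.tau t₂' → Trans (ec t₁ t₂) ActT.tau (ec t₁ t₂')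
  | conjAct : Trans t₁ (ActT.act a) t₁' → Trans t₂ (ActT.act a) t₂' →
      Trans (conj t₁ t₂) (ActT.act a) (conj t₁' t₂')
  | conjTauL : Trans t₁ ActT.tau t₁' → Trans (conj t₁ t₂) ActT.tau (conj t₁' t₂)
  | conjTauR : Trans t₂ ActT.tau t₂' → Trans (conj t₁ t₂) ActT.tau (conj t₁ t₂')
  | disjL : Trans (disj t₁ t₂) ActT.tau t₁
  | disjR : Trans (disj t₁ t₂) ActT.tau t₂
  | parTauL : Trans t₁ ActT.tau t₁' → Trans (par A t₁ t₂) ActT.tau (par A t₁' t₂)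
  | parTauR : Trans t₂ ActT.tau t₂' → Trans (par A t₁ t₂) ActT.tau (par A t₁ t₂')
  | parL : a ∉ A → Trans t₁ (ActT.act a) t₁' → ¬ hasTau t₂ →
      Trans (par A t₁ t₂) (ActT.act a) (par A t₁' t₂)
  | parR : a ∉ A → ¬ hasTau t₁ → Trans t₂ (ActT.act a) t₂' →
      Trans (par A t₁ t₂) (ActT.act a) (par A t₁ t₂')
  | parSync : a ∈ A → Trans t₁ (ActT.act a) t₁' → Trans t₂ (ActT.act a) t₂' →
      Trans (par A t₁ t₂) (ActT.act a) (par A t₁' t₂')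

/-- The ready set I(p). -/
def ready (p : Proc Act) : Set (ActT Act) := {α | ∃ q, Trans p α q}

/-- p is stable if it has no τ-transition. -/
def Stable (p : Proc Act) : Prop := ∀ q, ¬ Trans p ActT.tau q

/-- The inconsistency predicate F, as the least predicate closed under the
predicative rules of CLL_R. -/
inductive Fp : Proc Act → Prop where
  | bot : Fp bot
  | pre : Fp t → Fp (pre α t)
  | disj : Fp t₁ → Fp t₂ → Fp (disj t₁ t₂)
  | ecL : Fp t₁ → Fp (ec t₁ t₂)
  | ecR : Fp t₂ → Fp (ec t₁ t₂)
  | parL : Fp t₁ → Fp (par A t₁ t₂)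
  | parR : Fp t₂ → Fp (par A t₁ t₂)
  | conjL : Fp t₁ → Fp (conj t₁ t₂)
  | conjR : Fp t₂ → Fp (conj t₁ t₂)
  | conjReady : Stable (conj t₁ t₂) → ready t₁ ≠ ready t₂ → Fp (conj t₁ t₂)
  | conjSucc : Trans (conj t₁ t₂) α s → (∀ y, Trans (conj t₁ t₂) α y → Fp y) →
      Fp (conj t₁ t₂)
  | conjStable :
      (∀ y, Relation.ReflTransGen (fun x z => Trans x ActT.tau z) (conj t₁ t₂) y →
        Stable y → Fp y) →
      Fp (conj t₁ t₂)

/-- One τ-step with both endpoints consistent. -/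
def tauStepF (p q : Proc Act) : Prop := Trans p ActT.tau q ∧ ¬ Fp p ∧ ¬ Fp q

/-- p ⇒_F| q : a sequence of τ-transitions from p to q, all states outside F,
with q stable. -/
def epsF (p q : Proc Act) : Prop :=
  Relation.ReflTransGen tauStepF p q ∧ ¬ Fp p ∧ ¬ Fp q ∧ Stable q

/-- p =a⇒_F| q. -/
def wkF (a : Act) (p q : Proc Act) : Prop :=
  ∃ r s, Relation.ReflTransGen tauStepF p r ∧ ¬ Fp p ∧ ¬ Fp r ∧
    Trans r (ActT.act a) s ∧ ¬ Fp s ∧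
    Relation.ReflTransGen tauStepF s q ∧ ¬ Fp q ∧ Stable q

/-- R is a stable ready simulation. -/
def StableRS (R : Proc Act → Proc Act → Prop) : Prop :=
  ∀ p q, R p q →
    Stable p ∧ Stable q ∧
    (¬ Fp p → ¬ Fp q) ∧
    (∀ a p', wkF a p p' → ∃ q', wkF a q q' ∧ R p' q') ∧
    (¬ Fp p → ready p = ready q)

/-- p ⊏̃_RS q. -/
def rsLT (p q : Proc Act) : Prop := ∃ R, StableRS R ∧ R p q

/-- p ⊑_RS q. -/
def rsLE (p q : Proc Act) : Prop :=
  ∀ p', epsF p p' → ∃ q', epsF q q' ∧ rsLT p' q'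

/-- p =_RS q. -/
def rsEq (p q : Proc Act) : Prop := rsLE p q ∧ rsLE q p

/-- Basic process terms T(Σ_B): no ⊥ and no ∧. -/
inductive Basic : Proc Act → Prop where
  | nil : Basic nil
  | pre : Basic t → Basic (pre α t)
  | disj : Basic t₁ → Basic t₂ → Basic (disj t₁ t₂)
  | ec : Basic t₁ → Basic t₂ → Basic (ec t₁ t₂)
  | par : Basic t₁ → Basic t₂ → Basic (par A t₁ t₂)

/-- General external choice □ over a finite sequence (left-nested). -/
def ecList : List (Proc Act) → Proc Act
  | [] => nil
  | t :: ts => ts.foldl ec t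

/-- General disjunction ⋁ over a nonempty finite sequence (left-nested). -/
def djList : List (Proc Act) → Proc Act
  | [] => bot
  | t :: ts => ts.foldl disj t

/-- □_{i<n} a_i.t_i for a sequence of prefixed terms. -/
def ecPre (l : List (Act × Proc Act)) : Proc Act :=
  ecList (l.map fun x => pre (ActT.act x.1) x.2)

/-- The expansion term E = ((□Ω₁) □ (□Ω₂)) □ (□Ω₃). -/
noncomputable def expTerm (A : Set Act) (l₁ l₂ : List (Act × Proc Act)) : Proc Act :=
  ec (ec
      (ecList ((l₁.filter fun x => decide (x.1 ∉ A)).map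
        fun x => pre (ActT.act x.1) (par A x.2 (ecPre l₂))))
      (ecList ((l₂.filter fun x => decide (x.1 ∉ A)).map
        fun x => pre (ActT.act x.1) (par A (ecPre l₁) x.2))))
    (ecList (l₁.flatMap fun x =>
      (l₂.filter fun y => decide (y.1 = x.1 ∧ x.1 ∈ A)).map
        fun y => pre (ActT.act x.1) (par A x.2 y.2)))

/-- Normal forms NF_B. -/
inductive NFB : Proc Act → Prop where
  | mk (ls : List (List (Act × Proc Act))) (hne : ls ≠ [])
      (hnodup : ∀ l ∈ ls, (l.map Prod.fst).Nodup)
      (hsub : ∀ l ∈ ls, ∀ x ∈ l, NFB x.2) :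
      NFB (djList (ls.map ecPre))

/-- NF = NF_B ∪ {⊥}. -/
def NF (p : Proc Act) : Prop := NFB p ∨ p = bot

/-- Derivability ⊢ t ≤ t' in the proof system AX_CLL. -/
inductive Deriv : Proc Act → Proc Act → Prop where
  | refl (t) : Deriv t t
  | trans : Deriv t t' → Deriv t' t'' → Deriv t t''
  | mono_pre : Deriv t t' → Deriv (pre α t) (pre α t')
  | mono_ec : Deriv s s' → Deriv t t' → Deriv (ec s t) (ec s' t')
  | mono_conj : Deriv s s' → Deriv t t' → Deriv (conj s t) (conj s' t')
  | mono_disj : Deriv s s' → Deriv t t' → Deriv (disj s t) (disj s' t')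
  | mono_par : Deriv s s' → Deriv t t' → Deriv (par A s t) (par A s' t')
  -- external choice
  | ec_comm : Deriv (ec x y) (ec y x)
  | ec_assoc₁ : Deriv (ec (ec x y) z) (ec x (ec y z))
  | ec_assoc₂ : Deriv (ec x (ec y z)) (ec (ec x y) z)
  | ec_idem₁ : Deriv (ec x x) x
  | ec_idem₂ : Deriv x (ec x x)
  | ec_nil₁ : Deriv (ec x nil) x
  | ec_nil₂ : Deriv x (ec x nil)
  | ec_bot₁ : Deriv (ec x bot) bot
  | ec_bot₂ : Deriv bot (ec x bot)
  -- disjunction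
  | disj_comm : Deriv (disj x y) (disj y x)
  | disj_assoc₁ : Deriv (disj x (disj y z)) (disj (disj x y) z)
  | disj_assoc₂ : Deriv (disj (disj x y) z) (disj x (disj y z))
  | disj_idem₁ : Deriv (disj x x) x
  | disj_idem₂ : Deriv x (disj x x)
  | disj_bot₁ : Deriv (disj x bot) x
  | disj_bot₂ : Deriv x (disj x bot)
  | disj_le : Deriv x (disj x y)
  -- conjunction
  | conj_comm : Deriv (conj x y) (conj y x)
  | conj_idem₁ : Deriv (conj x x) x
  | conj_idem₂ : Deriv x (conj x x)
  | conj_bot₁ : Deriv (conj x bot) bot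
  | conj_bot₂ : Deriv bot (conj x bot)
  -- prefixing
  | pre_bot₁ : Deriv (pre (ActT.act a) bot) bot
  | pre_bot₂ : Deriv bot (pre (ActT.act a) bot)
  | tau_pre₁ : Deriv (pre ActT.tau x) x
  | tau_pre₂ : Deriv x (pre ActT.tau x)
  -- parallel
  | par_comm : Deriv (par A x y) (par A y x)
  | par_bot₁ : Deriv (par A x bot) bot
  | par_bot₂ : Deriv bot (par A x bot)
  -- distribution over disjunction
  | ds_ec : Deriv (ec x (disj y z)) (disj (ec x y) (ec x z))
  | ds_conj : Deriv (conj x (disj y z)) (disj (conj x y) (conj x z))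
  | ds_par : Deriv (par A x (disj y z)) (disj (par A x y) (par A x z))
  | ds_pre : Basic x → Basic y →
      Deriv (pre (ActT.act a) (disj x y)) (ec (pre (ActT.act a) x) (pre (ActT.act a) y))
  -- external choice and conjunction
  | ecc1₁ (l₁ l₂ : List (Act × Proc Act)) :
      {a | a ∈ l₁.map Prod.fst} ≠ {a | a ∈ l₂.map Prod.fst} →
      Deriv (conj (ecPre l₁) (ecPre l₂)) bot
  | ecc1₂ (l₁ l₂ : List (Act × Proc Act)) :
      {a | a ∈ l₁.map Prod.fst} ≠ {a | a ∈ l₂.map Prod.fst} →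
      Deriv bot (conj (ecPre l₁) (ecPre l₂))
  | ecc2 (l : List (Act × Proc Act × Proc Act)) :
      Deriv (ecPre (l.map fun x => (x.1, conj x.2.1 x.2.2)))
            (conj (ecPre (l.map fun x => (x.1, x.2.1)))
                  (ecPre (l.map fun x => (x.1, x.2.2))))
  | ecc3 (l : List (Act × Proc Act × Proc Act)) :
      (l.map Prod.fst).Nodup →
      Deriv (conj (ecPre (l.map fun x => (x.1, x.2.1)))
                  (ecPre (l.map fun x => (x.1, x.2.2))))
            (ecPre (l.map fun x => (x.1, conj x.2.1 x.2.2)))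
  -- expansion
  | exp1 (A : Set Act) (l₁ l₂ : List (Act × Proc Act)) :
      Deriv (par A (ecPre l₁) (ecPre l₂)) (expTerm A l₁ l₂)
  | exp2 (A : Set Act) (l₁ l₂ : List (Act × Proc Act)) :
      (∀ x ∈ l₁, Basic x.2) → (∀ x ∈ l₂, Basic x.2) →
      Deriv (expTerm A l₁ l₂) (par A (ecPre l₁) (ecPre l₂))

end Proc

namespace Proc

variable {Act : Type}

/-! ### Size measure -/

def psize : Proc Act → Nat
  | nil => 1
  | bot => 1
  | pre _ t => psize t + 1
  | ec a b => psize a + psize b + 1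
  | conj a b => psize a + psize b + 1
  | disj a b => psize a + psize b + 1
  | par _ a b => psize a + psize b + 1

theorem psize_pos (p : Proc Act) : 1 ≤ psize p := by
  cases p <;> simp [psize]

/-! ### hasTau / Stable basics -/

theorem hasTau_of_trans_tau {p q : Proc Act} (h : Trans p ActT.tau q) : hasTau p := by
  generalize hα : ActT.tau = α at h
  induction h <;> simp_all [hasTau]

theorem stable_of_not_hasTau {p : Proc Act} (h : ¬ hasTau p) : Stable p :=
  fun q hq => h (hasTau_of_trans_tau hq)

theorem not_hasTau_foldl_ec : ∀ {L : List (Proc Act)} {x : Proc Act},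
    ¬ hasTau x → (∀ y ∈ L, ¬ hasTau y) → ¬ hasTau (L.foldl ec x) := by
  intro L
  induction L with
  | nil => intro x hx _; exact hx
  | cons y L ih =>
      intro x hx hL
      exact ih (fun h => h.elim hx (hL y (.head _))) (fun z hz => hL z (.tail _ hz))

theorem not_hasTau_ecPre (l : List (Act × Proc Act)) : ¬ hasTau (ecPre l) := by
  cases l with
  | nil => simp [ecPre, ecList, hasTau]
  | cons x xs =>
      refine not_hasTau_foldl_ec (by simp [hasTau]) ?_
      intro y hy
      obtain ⟨⟨a, t⟩, _, rfl⟩ := List.mem_map.1 hy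
      simp [hasTau]

theorem stable_ecPre (l : List (Act × Proc Act)) : Stable (ecPre l) :=
  stable_of_not_hasTau (not_hasTau_ecPre l)

/-! ### Transitions of external choices -/

theorem trans_foldl_ec_elim : ∀ {L : List (Proc Act)} {x z : Proc Act} {α},
    ¬ hasTau x → (∀ y ∈ L, ¬ hasTau y) →
    Trans (L.foldl ec x) α z → ∃ w ∈ x :: L, Trans w α z := by
  intro L
  induction L with
  | nil => intro x z α hx _ h; exact ⟨x, .head _, h⟩
  | cons y L ih =>
      intro x z α hx hL h
      have hy : ¬ hasTau y := hL y (.head _)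
      obtain ⟨w, hw, hwt⟩ := ih (x := ec x y) (fun h => h.elim hx hy)
        (fun z hz => hL z (.tail _ hz)) h
      cases hw with
      | head =>
          cases hwt with
          | ecL h1 _ => exact ⟨x, .head _, h1⟩
          | ecR _ h2 => exact ⟨y, .tail _ (.head _), h2⟩
          | ecTauL h1 => exact absurd (hasTau_of_trans_tau h1) hx
          | ecTauR h2 => exact absurd (hasTau_of_trans_tau h2) hy
      | tail _ hw' => exact ⟨w, .tail _ (.tail _ hw'), hwt⟩

theorem trans_foldl_ec_intro : ∀ {L : List (Proc Act)} {x w z : Proc Act} {a : Act},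
    ¬ hasTau x → (∀ y ∈ L, ¬ hasTau y) →
    w ∈ x :: L → Trans w (ActT.act a) z →
    Trans (L.foldl ec x) (ActT.act a) z := by
  intro L
  induction L with
  | nil =>
      intro x w z a hx _ hw h
      cases hw with
      | head => exact h
      | tail _ h' => cases h'
  | cons y L ih =>
      intro x w z a hx hL hw h
      have hy : ¬ hasTau y := hL y (.head _)
      have hxy : ¬ hasTau (ec x y) := fun h => h.elim hx hy
      have hL' : ∀ z ∈ L, ¬ hasTau z := fun z hz => hL z (.tail _ hz)
      cases hw with
      | head => exact ih hxy hL' (.head _) (Trans.ecL h hy)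
      | tail _ hw' =>
          cases hw' with
          | head => exact ih hxy hL' (.head _) (Trans.ecR hx h)
          | tail _ hw'' => exact ih hxy hL' (.tail _ hw'') h

theorem trans_ecPre_iff {l : List (Act × Proc Act)} {α} {z : Proc Act} :
    Trans (ecPre l) α z ↔ ∃ a, α = ActT.act a ∧ (a, z) ∈ l := by
  constructor
  · intro h
    cases l with
    | nil => cases h
    | cons x xs =>
        obtain ⟨w, hw, hwt⟩ := trans_foldl_ec_elim (by simp [hasTau])
          (fun y hy => by obtain ⟨⟨a, t⟩, _, rfl⟩ := List.mem_map.1 hy; simp [hasTau]) h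
        have hw' : w ∈ (x :: xs).map (fun x => pre (ActT.act x.1) x.2) := hw
        obtain ⟨⟨a, t⟩, hmem, rfl⟩ := List.mem_map.1 hw'
        cases hwt with
        | pre => exact ⟨a, rfl, hmem⟩
  · rintro ⟨a, rfl, hmem⟩
    cases l with
    | nil => cases hmem
    | cons x xs =>
        have h2 : ∀ y ∈ xs.map (fun p : Act × Proc Act => pre (ActT.act p.1) p.2),
            ¬ hasTau y := by
          intro y hy
          obtain ⟨⟨b, t⟩, _, rfl⟩ := List.mem_map.1 hy
          simp [hasTau]
        cases hmem with
        | head => exact trans_foldl_ec_intro (by simp [hasTau]) h2 (.head _) Trans.pre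
        | tail _ hm =>
            exact trans_foldl_ec_intro (by simp [hasTau]) h2
              (.tail _ (List.mem_map.2 ⟨(a, z), hm, rfl⟩)) Trans.pre

theorem mem_ready_ecPre {l : List (Act × Proc Act)} {b : Act} :
    ActT.act b ∈ ready (ecPre l) ↔ b ∈ l.map Prod.fst := by
  constructor
  · rintro ⟨q, hq⟩
    obtain ⟨a, ha, hm⟩ := trans_ecPre_iff.1 hq
    injection ha with ha
    subst ha
    exact List.mem_map.2 ⟨(b, q), hm, rfl⟩
  · intro hb
    obtain ⟨⟨a, s⟩, hm, rfl⟩ := List.mem_map.1 hb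
    exact ⟨s, trans_ecPre_iff.2 ⟨_, rfl, hm⟩⟩

/-! ### Inconsistency basics -/

theorem not_fp_nil : ¬ Fp (nil : Proc Act) := fun h => by cases h

theorem fp_pre_inv {α} {t : Proc Act} (h : Fp (pre α t)) : Fp t := by
  cases h with | pre h => exact h

theorem fp_ec_inv {t₁ t₂ : Proc Act} (h : Fp (ec t₁ t₂)) : Fp t₁ ∨ Fp t₂ := by
  cases h with
  | ecL h => exact .inl h
  | ecR h => exact .inr h

theorem fp_disj_inv {t₁ t₂ : Proc Act} (h : Fp (disj t₁ t₂)) : Fp t₁ ∧ Fp t₂ := by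
  cases h with | disj a b => exact ⟨a, b⟩

theorem not_fp_foldl_ec : ∀ {L : List (Proc Act)} {x : Proc Act},
    ¬ Fp x → (∀ y ∈ L, ¬ Fp y) → ¬ Fp (L.foldl ec x) := by
  intro L
  induction L with
  | nil => intro x hx _; exact hx
  | cons y L ih =>
      intro x hx hL
      exact ih (fun h => (fp_ec_inv h).elim hx (hL y (.head _)))
        (fun z hz => hL z (.tail _ hz))

theorem not_fp_foldl_disj : ∀ {L : List (Proc Act)} {x : Proc Act},
    ¬ Fp x → ¬ Fp (L.foldl disj x) := by
  intro L
  induction L with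
  | nil => intro x hx; exact hx
  | cons y L ih => intro x hx; exact ih (fun h => hx (fp_disj_inv h).1)

theorem notFp_ecPre {l : List (Act × Proc Act)} (h : ∀ x ∈ l, ¬ Fp x.2) :
    ¬ Fp (ecPre l) := by
  cases l with
  | nil => exact not_fp_nil
  | cons x xs =>
      refine not_fp_foldl_ec (fun hf => h x (.head _) (fp_pre_inv hf)) ?_
      intro y hy
      obtain ⟨⟨a, t⟩, hm, rfl⟩ := List.mem_map.1 hy
      exact fun hf => h (a, t) (.tail _ hm) (fp_pre_inv hf)

theorem nfb_not_fp {t : Proc Act} (h : NFB t) : ¬ Fp t := by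
  induction h with
  | mk ls hne hnodup hsub ih =>
      cases ls with
      | nil => exact absurd rfl hne
      | cons l0 rest =>
          exact not_fp_foldl_disj (notFp_ecPre (fun x hx => ih l0 (.head _) x hx))

theorem nfb_ecPre {l : List (Act × Proc Act)} (hnd : (l.map Prod.fst).Nodup)
    (hsub : ∀ x ∈ l, NFB x.2) : NFB (ecPre l) :=
  NFB.mk [l] (by simp) (by simpa using hnd) (by simpa using hsub)

/-! ### Shapes and reachability for djList -/

theorem foldl_disj_cons (ys : List (Proc Act)) (x y : Proc Act) :
    ∃ u v, List.foldl disj x (y :: ys) = disj u v := by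
  induction ys generalizing x y with
  | nil => exact ⟨x, y, rfl⟩
  | cons y' ys ih => exact ih (disj x y) y'

theorem nfb_stable_ecPre {t : Proc Act} (h : NFB t) (hs : Stable t) :
    ∃ l, (l.map Prod.fst).Nodup ∧ (∀ x ∈ l, NFB x.2) ∧ t = ecPre l := by
  cases h with
  | mk ls hne hnodup hsub =>
      match ls, hne, hnodup, hsub, hs with
      | [l], _, hnodup, hsub, _ =>
          exact ⟨l, hnodup l (.head _), hsub l (.head _), rfl⟩
      | l :: l' :: rest, _, _, _, hs =>
          exfalso
          obtain ⟨u, v, huv⟩ := foldl_disj_cons (rest.map ecPre) (ecPre l) (ecPre l')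
          have : Trans (djList ((l :: l' :: rest).map ecPre)) ActT.tau u := by
            show Trans (List.foldl disj (ecPre l) (ecPre l' :: rest.map ecPre)) ActT.tau u
            rw [huv]; exact Trans.disjL
          exact hs u this

theorem reach_foldl_disj : ∀ {L : List (Proc Act)} {x z : Proc Act},
    ¬ Fp x → (∀ y ∈ L, ¬ Fp y) → z ∈ x :: L →
    Relation.ReflTransGen tauStepF (L.foldl disj x) z := by
  intro L
  induction L with
  | nil =>
      intro x z hx _ hz
      cases hz with
      | head => exact .refl
      | tail _ h => cases h
  | cons y L ih =>
      intro x z hx hL hz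
      have hfd : ¬ Fp (disj x y) := fun h => hx (fp_disj_inv h).1
      have hL' : ∀ u ∈ L, ¬ Fp u := fun u hu => hL u (.tail _ hu)
      have step : ∀ w, Trans (disj x y) ActT.tau w → ¬ Fp w →
          Relation.ReflTransGen tauStepF (List.foldl disj (disj x y) L) w :=
        fun w hw hwf => (ih hfd hL' (.head _)).tail ⟨hw, hfd, hwf⟩
      cases hz with
      | head => exact step x Trans.disjL hx
      | tail _ hz' =>
          cases hz' with
          | head => exact step y Trans.disjR (hL y (.head _))
          | tail _ h => exact ih hfd hL' (.tail _ h)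

theorem reach_foldl_disj_stable : ∀ {L : List (Proc Act)} {x z : Proc Act},
    (∀ y ∈ L, Stable y) →
    Relation.ReflTransGen (fun u v => Trans u ActT.tau v) (L.foldl disj x) z →
    Stable z →
    Relation.ReflTransGen (fun u v => Trans u ActT.tau v) x z ∨ z ∈ L := by
  intro L
  induction L with
  | nil => intro x z _ h _; exact .inl h
  | cons y L ih =>
      intro x z hL h hzs
      rcases ih (fun u hu => hL u (.tail _ hu)) h hzs with h' | h'
      · rcases Relation.ReflTransGen.cases_head h' with rfl | ⟨w, hw, hw'⟩
        · exact absurd Trans.disjL (hzs x)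
        · cases hw with
          | disjL => exact .inl hw'
          | disjR =>
              rcases Relation.ReflTransGen.cases_head hw' with rfl | ⟨v, hv, _⟩
              · exact .inr (.head _)
              · exact absurd hv (hL y (.head _) v)
      · exact .inr (.tail _ h')

theorem rtg_eq_of_stable {q r : Proc Act} (hq : Stable q)
    (h : Relation.ReflTransGen tauStepF q r) : r = q := by
  rcases Relation.ReflTransGen.cases_head h with rfl | ⟨w, hw, _⟩
  · rfl
  · exact absurd hw.1 (hq w)

theorem rtg_tau_eq_of_stable {q r : Proc Act} (hq : Stable q)
    (h : Relation.ReflTransGen (fun u v => Trans u ActT.tau v) q r) : r = q := by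
  rcases Relation.ReflTransGen.cases_head h with rfl | ⟨w, hw, _⟩
  · rfl
  · exact absurd hw (hq w)

/-! ### Derivability helpers -/

theorem deriv_bot_le (x : Proc Act) : Deriv bot x :=
  (Deriv.disj_le (y := x)).trans (Deriv.disj_comm.trans Deriv.disj_bot₁)

theorem deriv_mem_foldl_disj : ∀ {L : List (Proc Act)} {x z : Proc Act},
    z ∈ x :: L → Deriv z (L.foldl disj x) := by
  intro L
  induction L with
  | nil =>
      intro x z hz
      cases hz with
      | head => exact .refl _
      | tail _ h => cases h
  | cons y L ih =>
      intro x z hz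
      have hx : Deriv x (disj x y) := Deriv.disj_le
      have hy : Deriv y (disj x y) := Deriv.disj_le.trans Deriv.disj_comm
      cases hz with
      | head => exact hx.trans (ih (.head _))
      | tail _ h =>
          cases h with
          | head => exact hy.trans (ih (.head _))
          | tail _ h => exact ih (.tail _ h)

theorem deriv_foldl_disj_le : ∀ {L : List (Proc Act)} {x s : Proc Act},
    Deriv x s → (∀ y ∈ L, Deriv y s) → Deriv (L.foldl disj x) s := by
  intro L
  induction L with
  | nil => intro x s hx _; exact hx
  | cons y L ih =>
      intro x s hx hL
      exact ih ((Deriv.mono_disj hx (hL y (.head _))).trans Deriv.disj_idem₁)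
        (fun z hz => hL z (.tail _ hz))

theorem deriv_foldl_ec_mono {L L' : List (Proc Act)} {x x' : Proc Act}
    (hx : Deriv x x') (h : List.Forall₂ Deriv L L') :
    Deriv (L.foldl ec x) (L'.foldl ec x') := by
  induction h generalizing x x' with
  | nil => exact hx
  | cons h _ ih => exact ih (Deriv.mono_ec hx h)

theorem deriv_ecList_mono {L L' : List (Proc Act)} (h : List.Forall₂ Deriv L L') :
    Deriv (ecList L) (ecList L') := by
  cases h with
  | nil => exact .refl _
  | cons hxy htail => exact deriv_foldl_ec_mono hxy htail

/-! ### Derivable equality and permutations of external choices -/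

def DEq (x y : Proc Act) : Prop := Deriv x y ∧ Deriv y x

theorem deq_refl (x : Proc Act) : DEq x x := ⟨.refl x, .refl x⟩

theorem DEq.symm {x y : Proc Act} (h : DEq x y) : DEq y x := ⟨h.2, h.1⟩

theorem DEq.trans {x y z : Proc Act} (h : DEq x y) (h' : DEq y z) : DEq x z :=
  ⟨h.1.trans h'.1, h'.2.trans h.2⟩

theorem deq_ec_congr {x x' y y' : Proc Act} (h : DEq x x') (h' : DEq y y') :
    DEq (ec x y) (ec x' y') := ⟨Deriv.mono_ec h.1 h'.1, Deriv.mono_ec h.2 h'.2⟩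

theorem deq_ec_comm {x y : Proc Act} : DEq (ec x y) (ec y x) := ⟨.ec_comm, .ec_comm⟩

theorem deq_ec_assoc {x y z : Proc Act} : DEq (ec (ec x y) z) (ec x (ec y z)) :=
  ⟨.ec_assoc₁, .ec_assoc₂⟩

theorem deq_ec_nil {x : Proc Act} : DEq (ec x nil) x := ⟨.ec_nil₁, .ec_nil₂⟩

theorem deq_foldl_ec_cons (L : List (Proc Act)) (x : Proc Act) :
    DEq (L.foldl ec x) (ec x (ecList L)) := by
  induction L generalizing x with
  | nil => exact (deq_ec_nil (x := x)).symm
  | cons y L ih =>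
      exact (ih (ec x y)).trans (deq_ec_assoc.trans (deq_ec_congr (deq_refl x) (ih y).symm))

theorem deq_ecList_perm {L L' : List (Proc Act)} (h : L.Perm L') :
    DEq (ecList L) (ecList L') := by
  induction h with
  | nil => exact deq_refl _
  | cons x h ih =>
      exact (deq_foldl_ec_cons _ _).trans
        ((deq_ec_congr (deq_refl x) ih).trans (deq_foldl_ec_cons _ _).symm)
  | swap x y L =>
      refine ((deq_foldl_ec_cons _ _).trans ?_).trans (deq_foldl_ec_cons _ _).symm
      refine ((deq_ec_congr (deq_refl y) (deq_foldl_ec_cons _ _)).trans ?_).trans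
        (deq_ec_congr (deq_refl x) (deq_foldl_ec_cons _ _)).symm
      exact deq_ec_assoc.symm.trans ((deq_ec_congr deq_ec_comm (deq_refl _)).trans deq_ec_assoc)
  | trans _ _ ih1 ih2 => exact ih1.trans ih2

theorem deq_ecPre_perm {l l' : List (Act × Proc Act)} (h : l.Perm l') :
    DEq (ecPre l) (ecPre l') :=
  deq_ecList_perm (h.map _)

/-! ### Lists with nodup keys -/

theorem nodup_key_unique : ∀ {l : List (Act × Proc Act)}, (l.map Prod.fst).Nodup →
    ∀ {a : Act} {s s' : Proc Act}, (a, s) ∈ l → (a, s') ∈ l → s = s' := by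
  intro l
  induction l with
  | nil => intro _ _ _ _ h; cases h
  | cons x l ih =>
      intro hnd a s s' h1 h2
      simp only [List.map_cons, List.nodup_cons] at hnd
      cases h1 with
      | head =>
          cases h2 with
          | head => rfl
          | tail _ h2' => exact absurd (List.mem_map.2 ⟨(a, s'), h2', rfl⟩) hnd.1
      | tail _ h1' =>
          cases h2 with
          | head => exact absurd (List.mem_map.2 ⟨(a, s), h1', rfl⟩) hnd.1
          | tail _ h2' => exact ih hnd.2 h1' h2'

theorem lift_perm : ∀ (K : List Act) (l : List (Act × Proc Act)),
    (l.map Prod.fst).Perm K → ∃ l', l.Perm l' ∧ l'.map Prod.fst = K := by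
  intro K
  induction K with
  | nil =>
      intro l h
      have h0 : l.map Prod.fst = [] := h.eq_nil
      have : l = [] := by cases l with | nil => rfl | cons => simp at h0
      exact ⟨[], by simp [this], rfl⟩
  | cons a K ih =>
      intro l h
      classical
      have ha : a ∈ l.map Prod.fst := h.mem_iff.2 (.head _)
      obtain ⟨⟨a', s⟩, hm, rfl⟩ := List.mem_map.1 ha
      have hpe := List.perm_cons_erase hm
      have h2 := (List.perm_cons a').1 ((hpe.map Prod.fst).symm.trans h)
      obtain ⟨l'', hp'', hf''⟩ := ih _ h2
      exact ⟨(a', s) :: l'', hpe.trans (hp''.cons _), by simp [hf'']⟩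

theorem forall2_aux : ∀ (l l' : List (Act × Proc Act)),
    l.map Prod.fst = l'.map Prod.fst →
    (∀ x ∈ l, ∀ y ∈ l', x.1 = y.1 →
      Deriv (pre (ActT.act x.1) x.2) (pre (ActT.act y.1) y.2)) →
    List.Forall₂ Deriv (l.map fun x => pre (ActT.act x.1) x.2)
      (l'.map fun x => pre (ActT.act x.1) x.2) := by
  intro l
  induction l with
  | nil =>
      intro l' h _
      cases l' with
      | nil => exact .nil
      | cons => simp at h
  | cons x l ih =>
      intro l' h hD
      cases l' with
      | nil => simp at h
      | cons y l'' =>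
          simp only [List.map_cons, List.cons.injEq] at h
          exact .cons (hD x (.head _) y (.head _) h.1)
            (ih l'' h.2 (fun u hu v hv huv => hD u (.tail _ hu) v (.tail _ hv) huv))

/-! ### Size lemmas -/

theorem psize_mem_le_foldl_ec : ∀ {L : List (Proc Act)} {x z : Proc Act},
    z ∈ x :: L → psize z ≤ psize (L.foldl ec x) := by
  intro L
  induction L with
  | nil =>
      intro x z hz
      cases hz with
      | head => exact le_rfl
      | tail _ h => cases h
  | cons y L ih =>
      intro x z hz
      have hx : psize x ≤ psize (ec x y) := by simp only [psize]; omega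
      have hy : psize y ≤ psize (ec x y) := by simp only [psize]; omega
      cases hz with
      | head => exact le_trans hx (ih (.head _))
      | tail _ h =>
          cases h with
          | head => exact le_trans hy (ih (.head _))
          | tail _ h => exact ih (.tail _ h)

theorem psize_mem_le_foldl_disj : ∀ {L : List (Proc Act)} {x z : Proc Act},
    z ∈ x :: L → psize z ≤ psize (L.foldl disj x) := by
  intro L
  induction L with
  | nil =>
      intro x z hz
      cases hz with
      | head => exact le_rfl
      | tail _ h => cases h
  | cons y L ih =>
      intro x z hz
      have hx : psize x ≤ psize (disj x y) := by simp only [psize]; omega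
      have hy : psize y ≤ psize (disj x y) := by simp only [psize]; omega
      cases hz with
      | head => exact le_trans hx (ih (.head _))
      | tail _ h =>
          cases h with
          | head => exact le_trans hy (ih (.head _))
          | tail _ h => exact ih (.tail _ h)

theorem psize_lt_of_mem_ecPre {l : List (Act × Proc Act)} {a : Act} {t : Proc Act}
    (h : (a, t) ∈ l) : psize t < psize (ecPre l) := by
  cases l with
  | nil => cases h
  | cons x xs =>
      have hle : psize (pre (ActT.act a) t) ≤
          psize ((xs.map fun p : Act × Proc Act => pre (ActT.act p.1) p.2).foldl ec
            (pre (ActT.act x.1) x.2)) := by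
        cases h with
        | head => exact psize_mem_le_foldl_ec (.head _)
        | tail _ hm => exact psize_mem_le_foldl_ec (.tail _ (List.mem_map.2 ⟨(a, t), hm, rfl⟩))
      have heq : psize (ecPre (x :: xs)) =
          psize ((xs.map fun p : Act × Proc Act => pre (ActT.act p.1) p.2).foldl ec
            (pre (ActT.act x.1) x.2)) := rfl
      rw [heq]
      simp only [psize] at hle
      omega

/-! ### Key lemma -/

theorem key : ∀ (n : ℕ) (l₁ l₂ : List (Act × Proc Act)),
    psize (ecPre l₁) ≤ n →
    (l₁.map Prod.fst).Nodup → (∀ x ∈ l₁, NFB x.2) →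
    (l₂.map Prod.fst).Nodup → (∀ x ∈ l₂, NFB x.2) →
    rsLT (ecPre l₁) (ecPre l₂) → Deriv (ecPre l₁) (ecPre l₂) := by
  intro n
  induction n with
  | zero =>
      intro l₁ _ hsz
      exact absurd hsz (by have := psize_pos (ecPre l₁); omega)
  | succ n ih =>
      intro l₁ l₂ hsz hnd₁ hsub₁ hnd₂ hsub₂ hlt
      obtain ⟨R, hRS, hr⟩ := hlt
      obtain ⟨hst₁, hst₂, hfp, hsim, hready⟩ := hRS _ _ hr
      have hnf₁ : ¬ Fp (ecPre l₁) := notFp_ecPre (fun x hx => nfb_not_fp (hsub₁ x hx))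
      have hready' : ready (ecPre l₁) = ready (ecPre l₂) := hready hnf₁
      -- componentwise derivability
      have hcomp : ∀ a t, (a, t) ∈ l₁ → ∀ s, (a, s) ∈ l₂ → Deriv t s := by
        intro a t hmem s hmem₂
        have hnt : NFB t := hsub₁ (a, t) hmem
        have hns : NFB s := hsub₂ (a, s) hmem₂
        cases hns with
        | mk ms hmne hmnd hmsub =>
        cases hnt with
        | mk ls hlne hlnd hlsub =>
        cases ls with
        | nil => exact absurd rfl hlne
        | cons l0 rest =>
        cases ms with
        | nil => exact absurd rfl hmne
        | cons m0 mrest =>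
        have hnfls : ∀ l'' ∈ l0 :: rest, ¬ Fp (ecPre l'') :=
          fun l'' h => notFp_ecPre (fun x hx => nfb_not_fp (hlsub l'' h x hx))
        have hnfT : ¬ Fp (djList ((l0 :: rest).map ecPre)) :=
          not_fp_foldl_disj (hnfls l0 (.head _))
        have hkey : ∀ l' ∈ l0 :: rest, Deriv (ecPre l') (djList ((m0 :: mrest).map ecPre)) := by
          intro l' hl'
          -- build the weak transition on the left
          have hzmem : ecPre l' ∈ ecPre l0 :: rest.map ecPre := by
            cases hl' with
            | head => exact .head _
            | tail _ h => exact .tail _ (List.mem_map.2 ⟨l', h, rfl⟩)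
          have hwk : wkF a (ecPre l₁) (ecPre l') := by
            refine ⟨ecPre l₁, djList ((l0 :: rest).map ecPre), .refl, hnf₁, hnf₁, ?_, hnfT,
              ?_, hnfls l' hl', stable_ecPre l'⟩
            · exact trans_ecPre_iff.2 ⟨a, rfl, hmem⟩
            · exact reach_foldl_disj (hnfls l0 (.head _))
                (fun y hy => by
                  obtain ⟨l'', hm, rfl⟩ := List.mem_map.1 hy
                  exact hnfls l'' (.tail _ hm)) hzmem
          obtain ⟨q', hwk₂, hr'⟩ := hsim a (ecPre l') hwk
          obtain ⟨r, s₀, hrtg1, _, _, htr, hnfs₀, hrtg2, hnfq', hstq'⟩ := hwk₂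
          have hrq : r = ecPre l₂ := rtg_eq_of_stable (stable_ecPre l₂) hrtg1
          subst hrq
          obtain ⟨a', ha', hmem'⟩ := trans_ecPre_iff.1 htr
          injection ha' with ha'
          subst ha'
          have hseq : s₀ = djList ((m0 :: mrest).map ecPre) :=
            nodup_key_unique hnd₂ hmem' hmem₂
          subst hseq
          have hτ : Relation.ReflTransGen (fun u v => Trans u ActT.tau v)
              ((mrest.map ecPre).foldl disj (ecPre m0)) q' :=
            Relation.ReflTransGen.mono (fun _ _ (h : tauStepF _ _) => h.1) _ _ hrtg2
          have hq'mem : ∃ m, m ∈ m0 :: mrest ∧ q' = ecPre m := by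
            rcases reach_foldl_disj_stable
                (fun y hy => by
                  obtain ⟨m, hm, rfl⟩ := List.mem_map.1 hy
                  exact stable_ecPre m) hτ hstq' with h' | h'
            · exact ⟨m0, .head _, rtg_tau_eq_of_stable (stable_ecPre m0) h'⟩
            · obtain ⟨m, hm, rfl⟩ := List.mem_map.1 h'
              exact ⟨m, .tail _ hm, rfl⟩
          obtain ⟨m, hm, rfl⟩ := hq'mem
          -- size bound
          have hsz1 : psize (ecPre l') ≤ psize (djList ((l0 :: rest).map ecPre)) :=
            psize_mem_le_foldl_disj hzmem
          have hsz2 : psize (djList ((l0 :: rest).map ecPre)) < psize (ecPre l₁) :=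
            psize_lt_of_mem_ecPre hmem
          have hd : Deriv (ecPre l') (ecPre m) :=
            ih l' m (by omega) (hlnd l' hl') (hlsub l' hl') (hmnd m hm) (hmsub m hm)
              ⟨R, hRS, hr'⟩
          refine hd.trans (deriv_mem_foldl_disj ?_)
          cases hm with
          | head => exact .head _
          | tail _ h => exact .tail _ (List.mem_map.2 ⟨m, h, rfl⟩)
        exact deriv_foldl_disj_le (hkey l0 (.head _))
          (fun z hz => by
            obtain ⟨l', hm, rfl⟩ := List.mem_map.1 hz
            exact hkey l' (.tail _ hm))
      -- assemble the whole external choice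
      have hact : ∀ b, b ∈ l₂.map Prod.fst ↔ b ∈ l₁.map Prod.fst := fun b =>
        mem_ready_ecPre.symm.trans (by rw [← hready']; exact mem_ready_ecPre)
      have hperm : (l₂.map Prod.fst).Perm (l₁.map Prod.fst) :=
        (List.perm_ext_iff_of_nodup hnd₂ hnd₁).2 hact
      obtain ⟨l₂', hperm₂, hfst⟩ := lift_perm _ _ hperm
      have h1 : Deriv (ecPre l₁) (ecPre l₂') := by
        refine deriv_ecList_mono (forall2_aux l₁ l₂' hfst.symm ?_)
        intro x hx y hy hxy
        have hy₂ : (x.1, y.2) ∈ l₂ := by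
          rw [hxy]
          exact hperm₂.symm.subset hy
        rw [← hxy]
        exact Deriv.mono_pre (hcomp x.1 x.2 hx y.2 hy₂)
      exact h1.trans (deq_ecPre_perm hperm₂).2

/-- Completeness of AX_CLL for normal forms. -/
theorem stmt18 {Act : Type} (t₁ t₂ : Proc Act) (h₁ : NF t₁) (h₂ : NF t₂)
    (h : rsLT t₁ t₂) : Deriv t₁ t₂ := by
  rcases h₁ with h₁ | rfl
  · obtain ⟨R, hRS, hr⟩ := h
    obtain ⟨hst₁, hst₂, hfp, _, _⟩ := hRS _ _ hr
    have hnf₁ := nfb_not_fp h₁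
    have hnf₂ := hfp hnf₁
    rcases h₂ with h₂ | rfl
    · obtain ⟨l₁, hnd₁, hsub₁, rfl⟩ := nfb_stable_ecPre h₁ hst₁
      obtain ⟨l₂, hnd₂, hsub₂, rfl⟩ := nfb_stable_ecPre h₂ hst₂
      exact key (psize (ecPre l₁)) l₁ l₂ le_rfl hnd₁ hsub₁ hnd₂ hsub₂ ⟨R, hRS, hr⟩
    · exact absurd Fp.bot hnf₂
  · exact deriv_bot_le t₂

end Proc
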